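/- Let n ∈ ℤ_{−ε} with n > 0, and consider the module π′(ε,n). Then A = span{v_j : j ∈ ℤ_ε, j ≤ −(n+1)} and B = span{v_j : j ∈ ℤ_ε, j ≤ n−1} are submodules with A ⊂ B; A is irreducible, the quotient module B/A is irreducible of dimension n, and the quotient module V_ε/B is irreducible. (Thus π′(ε,n) has composition series of shape (D_{−n} ] F_n ] D_n).) -/

import Mathlib

namespace SL2Deform

/-- The index set `ℤ_ε = {j : ℤ | (-1)^j = ε}`, for a sign `ε ∈ {1, -1}`
(i.e. a unit of `ℤ`). -/
abbrev idx (ε : ℤˣ) : Type := {j : ℤ // (-1 : ℤˣ) ^ j = ε}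

/-- `V ε`: the complex vector space of finitely supported functions on `ℤ_ε`,
with standard basis `{v_j}`. -/
abbrev V (ε : ℤˣ) : Type := idx ε →₀ ℂ

/-- The standard basis vector `v_j` of `V ε`, for `j ∈ ℤ_ε`. -/
noncomputable def bv (ε : ℤˣ) (j : ℤ) (h : (-1 : ℤˣ) ^ j = ε) : V ε :=
  Finsupp.single ⟨j, h⟩ 1

lemma parity_two : (-1 : ℤˣ) ^ (2 : ℤ) = 1 := by decide
lemma parity_neg_two : (-1 : ℤˣ) ^ (-2 : ℤ) = 1 := by decide
lemma parity_zero : (-1 : ℤˣ) ^ (0 : ℤ) = 1 := by decide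

lemma parity_shift {ε : ℤˣ} {j : ℤ} (h : (-1 : ℤˣ) ^ j = ε) {s : ℤ}
    (hs : (-1 : ℤˣ) ^ s = 1) : (-1 : ℤˣ) ^ (j + s) = ε := by
  rw [zpow_add, h, hs, mul_one]

/-- If `m ∈ ℤ_{-ε}` then `m + 1 ∈ ℤ_ε`. -/
lemma parity_succ {ε : ℤˣ} {m : ℤ} (h : (-1 : ℤˣ) ^ m = -ε) :
    (-1 : ℤˣ) ^ (m + 1) = ε := by
  rw [zpow_add, h, zpow_one]
  simp

/-- If `m ∈ ℤ_{-ε}` then `m - 1 ∈ ℤ_ε`. -/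
lemma parity_pred {ε : ℤˣ} {m : ℤ} (h : (-1 : ℤˣ) ^ m = -ε) :
    (-1 : ℤˣ) ^ (m - 1) = ε := by
  rw [sub_eq_add_neg, zpow_add, h, zpow_neg, zpow_one]
  simp

/-- The linear operator on `V ε` sending `v_j` to `c j • v_{j+s}`,
for an even shift `s`. -/
noncomputable def shiftOp (ε : ℤˣ) (s : ℤ) (hs : (-1 : ℤˣ) ^ s = 1) (c : ℤ → ℂ) :
    V ε →ₗ[ℂ] V ε :=
  Finsupp.lsum ℂ fun j =>
    LinearMap.toSpanSingleton ℂ (V ε)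
      (Finsupp.single ⟨j.1 + s, parity_shift j.2 hs⟩ (c j.1))

/-- `H v_j = j • v_j`. -/
noncomputable def Hop (ε : ℤˣ) : V ε →ₗ[ℂ] V ε :=
  shiftOp ε 0 parity_zero fun j => (j : ℂ)

/-- Principal series: `E v_j = ½(ν + j + 1) • v_{j+2}`. -/
noncomputable def Eop (ε : ℤˣ) (ν : ℂ) : V ε →ₗ[ℂ] V ε :=
  shiftOp ε 2 parity_two fun j => (1 / 2 : ℂ) * (ν + j + 1)

/-- Principal series: `F v_j = ½(ν - j + 1) • v_{j-2}`. -/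
noncomputable def Fop (ε : ℤˣ) (ν : ℂ) : V ε →ₗ[ℂ] V ε :=
  shiftOp ε (-2) parity_neg_two fun j => (1 / 2 : ℂ) * (ν - j + 1)

/-- `f_m(ν) = ½ |ν²-m²|^{1/2} (ν+m)/|ν+m|` for `ν ≠ -m`, and `f_m(-m) = 0`. -/
noncomputable def fm (m : ℤ) (ν : ℂ) : ℂ :=
  if ν = -(m : ℂ) then 0
  else (1 / 2 : ℂ) * (Real.sqrt (‖ν ^ 2 - (m : ℂ) ^ 2‖) : ℝ) * (ν + m) /
    (‖ν + (m : ℂ)‖ : ℝ)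

/-- Deformed module: `E v_{m-1} = f_m(ν) • v_{m+1}`, i.e. `E v_j = f_{j+1}(ν) • v_{j+2}`. -/
noncomputable def PEop (ε : ℤˣ) (ν : ℂ) : V ε →ₗ[ℂ] V ε :=
  shiftOp ε 2 parity_two fun j => fm (j + 1) ν

/-- Deformed module: `F v_{m+1} = f_{-m}(ν) • v_{m-1}`, i.e. `F v_j = f_{-(j-1)}(ν) • v_{j-2}`. -/
noncomputable def PFop (ε : ℤˣ) (ν : ℂ) : V ε →ₗ[ℂ] V ε :=
  shiftOp ε (-2) parity_neg_two fun j => fm (1 - j) ν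

/-- The module `π'(ε,ν)`: `E v_{m-1} = ½(ν - |m|) • v_{m+1}`,
i.e. `E v_j = ½(ν - |j+1|) • v_{j+2}`. -/
noncomputable def E'op (ε : ℤˣ) (ν : ℂ) : V ε →ₗ[ℂ] V ε :=
  shiftOp ε 2 parity_two fun j => (1 / 2 : ℂ) * (ν - ((|j + 1| : ℤ) : ℂ))

/-- The module `π'(ε,ν)`: `F v_{m+1} = ½(ν + |m|) • v_{m-1}`,
i.e. `F v_j = ½(ν + |j-1|) • v_{j-2}`. -/
noncomputable def F'op (ε : ℤˣ) (ν : ℂ) : V ε →ₗ[ℂ] V ε :=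
  shiftOp ε (-2) parity_neg_two fun j => (1 / 2 : ℂ) * (ν + ((|j - 1| : ℤ) : ℂ))

/-- `ν ∈ ℤ_{-ε}`: `ν` is an integer with `(-1)^ν = -ε`. -/
def inZminus (ε : ℤˣ) (ν : ℂ) : Prop :=
  ∃ n : ℤ, ν = (n : ℂ) ∧ (-1 : ℤˣ) ^ n = -ε

section ModuleNotions

variable {M : Type*} [AddCommGroup M] [Module ℂ M]
variable {N : Type*} [AddCommGroup N] [Module ℂ N]

/-- `W` is a submodule for the module with operators `A, B, C`: it is invariant
under all three operators. -/
def Invariant (A B C : M →ₗ[ℂ] M) (W : Submodule ℂ M) : Prop :=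
  (∀ x ∈ W, A x ∈ W) ∧ (∀ x ∈ W, B x ∈ W) ∧ (∀ x ∈ W, C x ∈ W)

/-- The module with operators `A, B, C` is irreducible: its only submodules are
`0` and the whole space. -/
def IsIrreducibleRep (A B C : M →ₗ[ℂ] M) : Prop :=
  ∀ W : Submodule ℂ M, Invariant A B C W → W = ⊥ ∨ W = ⊤

/-- `W` is an irreducible submodule: invariant, nonzero, and with no nonzero
proper invariant subspace. -/
def IsIrreducibleSubmodule (A B C : M →ₗ[ℂ] M) (W : Submodule ℂ M) : Prop :=
  Invariant A B C W ∧ W ≠ ⊥ ∧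
    ∀ U : Submodule ℂ M, Invariant A B C U → U ≤ W → U = ⊥ ∨ U = W

/-- The module with operators `A, B, C` is completely reducible: every invariant
subspace has an invariant complement. -/
def CompletelyReducible (A B C : M →ₗ[ℂ] M) : Prop :=
  ∀ W : Submodule ℂ M, Invariant A B C W →
    ∃ U : Submodule ℂ M, Invariant A B C U ∧ IsCompl W U

/-- The two modules (given by operator triples) are isomorphic. -/
def Intertwined (A B C : M →ₗ[ℂ] M) (A' B' C' : N →ₗ[ℂ] N) : Prop :=
  ∃ e : M ≃ₗ[ℂ] N, (∀ x, e (A x) = A' (e x)) ∧ (∀ x, e (B x) = B' (e x)) ∧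
    (∀ x, e (C x) = C' (e x))

/-- An invariant Hermitian form for the module with operators `A, B, C`
(`A` playing the role of `H`, `B` of `E`, `C` of `F`): a sesquilinear form,
conjugate-symmetric, with `⟨Hv,w⟩ = ⟨v,Hw⟩`, `⟨Ev,w⟩ + ⟨v,Fw⟩ = 0`,
`⟨Fv,w⟩ + ⟨v,Ew⟩ = 0`. -/
structure IsInvHermForm (A B C : M →ₗ[ℂ] M) (Φ : M → M → ℂ) : Prop where
  add_left : ∀ u v w, Φ (u + v) w = Φ u w + Φ v w
  smul_left : ∀ (a : ℂ) (v w : M), Φ (a • v) w = a * Φ v w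
  conj_symm : ∀ v w, Φ w v = (starRingEnd ℂ) (Φ v w)
  inv_A : ∀ v w, Φ (A v) w = Φ v (A w)
  inv_BC : ∀ v w, Φ (B v) w + Φ v (C w) = 0
  inv_CB : ∀ v w, Φ (C v) w + Φ v (B w) = 0

end ModuleNotions

/-- `span{v_j : j ≥ n}`. -/
noncomputable def spanGE (ε : ℤˣ) (n : ℤ) : Submodule ℂ (V ε) :=
  Submodule.span ℂ {x : V ε | ∃ j : idx ε, n ≤ j.1 ∧ x = Finsupp.single j 1}

/-- `span{v_j : j ≤ n}`. -/
noncomputable def spanLE (ε : ℤˣ) (n : ℤ) : Submodule ℂ (V ε) :=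
  Submodule.span ℂ {x : V ε | ∃ j : idx ε, j.1 ≤ n ∧ x = Finsupp.single j 1}

/-- `span{v_j : |j| ≤ n}`. -/
noncomputable def spanAbsLE (ε : ℤˣ) (n : ℤ) : Submodule ℂ (V ε) :=
  Submodule.span ℂ {x : V ε | ∃ j : idx ε, |j.1| ≤ n ∧ x = Finsupp.single j 1}

/-- The diagonal operator `S v_j = c j • v_j`. -/
noncomputable def diagMap (ε : ℤˣ) (c : idx ε → ℂ) : V ε →ₗ[ℂ] V ε :=
  Finsupp.lsum ℂ fun j => LinearMap.toSpanSingleton ℂ (V ε) (Finsupp.single j (c j))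

section Aux
variable {ε : ℤˣ}

lemma single_congr {a b : ℤ} (ha : (-1:ℤˣ)^a = ε) (hb : (-1:ℤˣ)^b = ε)
    (hab : a = b) (c : ℂ) :
    (Finsupp.single ⟨a, ha⟩ c : V ε) = Finsupp.single ⟨b, hb⟩ c := by
  subst hab; rfl

lemma shiftOp_single (s : ℤ) (hs : (-1:ℤˣ)^s = 1) (c : ℤ → ℂ) (j : idx ε) (a : ℂ) :
    shiftOp ε s hs c (Finsupp.single j a) =
      Finsupp.single ⟨j.1 + s, parity_shift j.2 hs⟩ (a * c j.1) := by
  simp [shiftOp, Finsupp.lsum_single, LinearMap.toSpanSingleton_apply,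
    Finsupp.smul_single]

lemma Hop_apply (x : V ε) (i : idx ε) : Hop ε x i = (i.1 : ℂ) * x i := by
  induction x using Finsupp.induction_linear with
  | zero => simp
  | add f g hf hg => simp [map_add, Finsupp.add_apply, hf, hg, mul_add]
  | single j a =>
    rw [Hop, shiftOp_single]
    have hidx : (⟨j.1 + 0, parity_shift j.2 parity_zero⟩ : idx ε) = j :=
      Subtype.ext (add_zero _)
    rw [hidx]
    rcases eq_or_ne j i with rfl | hne
    · simp [mul_comm]
    · simp [Finsupp.single_apply, hne]

end Aux
section Aux2
variable {ε : ℤˣ}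

lemma neg_one_zpow_even {a : ℤ} (ha : Even a) : (-1:ℤˣ)^a = 1 := by
  obtain ⟨k, rfl⟩ := ha
  rw [show k + k = 2 * k by ring, zpow_mul, parity_two, one_zpow]

lemma even_of_parity {a b : ℤ} (ha : (-1:ℤˣ)^a = ε) (hb : (-1:ℤˣ)^b = ε) :
    Even (a - b) := by
  by_contra h
  rw [Int.not_even_iff_odd] at h
  obtain ⟨k, hk⟩ := h
  have h1 : (-1:ℤˣ) ^ (a - b) = -1 := by
    rw [hk, zpow_add, zpow_mul, parity_two, one_zpow, zpow_one, one_mul]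
  have h2 : (-1:ℤˣ) ^ (a - b) = 1 := by
    rw [sub_eq_add_neg, zpow_add, ha, zpow_neg, hb]
    exact mul_inv_cancel ε
  rw [h1] at h2
  exact absurd h2 (by decide)

lemma mem_spanLE_single {m : ℤ} (j : idx ε) (hj : j.1 ≤ m) :
    (Finsupp.single j 1 : V ε) ∈ spanLE ε m :=
  Submodule.subset_span ⟨j, hj, rfl⟩

lemma spanLE_apply_eq_zero {m : ℤ} {x : V ε} (hx : x ∈ spanLE ε m)
    (i : idx ε) (hi : m < i.1) : x i = 0 := by
  have : spanLE ε m ≤ LinearMap.ker (Finsupp.lapply (M := ℂ) (R := ℂ) i) := by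
    rw [spanLE, Submodule.span_le]
    rintro y ⟨j, hj, rfl⟩
    have : j ≠ i := fun h => absurd (h ▸ hj) (not_le.2 hi)
    simp [LinearMap.mem_ker, Finsupp.lapply_apply, Finsupp.single_apply, this]
  simpa [LinearMap.mem_ker, Finsupp.lapply_apply] using this hx

lemma spanLE_mono {m m' : ℤ} (h : m ≤ m') : spanLE ε m ≤ spanLE ε m' :=
  Submodule.span_mono (fun x ⟨j, hj, hx⟩ => ⟨j, hj.trans h, hx⟩)

lemma mem_of_support (W : Submodule ℂ (V ε)) (x : V ε)
    (h : ∀ i ∈ x.support, (Finsupp.single i 1 : V ε) ∈ W) : x ∈ W := by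
  have hx : x = ∑ i ∈ x.support, (x i) • (Finsupp.single i 1 : V ε) := by
    conv_lhs => rw [← Finsupp.sum_single x]
    rw [Finsupp.sum]
    exact Finset.sum_congr rfl fun i _ => by rw [Finsupp.smul_single, smul_eq_mul, mul_one]
  rw [hx]
  exact Submodule.sum_mem _ fun i hi => Submodule.smul_mem _ _ (h i hi)

lemma mem_spanLE_of_support {m : ℤ} (x : V ε)
    (h : ∀ i ∈ x.support, i.1 ≤ m) : x ∈ spanLE ε m :=
  mem_of_support _ x fun i hi => mem_spanLE_single i (h i hi)

/-- extraction: if `W` is `H`-invariant, `x ∈ W`, then each basis vector in the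
support of `x` lies in `W`. -/
lemma extract {W : Submodule ℂ (V ε)} (hW : ∀ x ∈ W, Hop ε x ∈ W) :
    ∀ (N : ℕ) (x : V ε), x.support.card ≤ N → x ∈ W →
      ∀ j ∈ x.support, (Finsupp.single j 1 : V ε) ∈ W := by
  intro N
  induction N with
  | zero => intro x hc _ j hj; rw [Nat.le_zero, Finset.card_eq_zero] at hc; simp [hc] at hj
  | succ N ih =>
    intro x hc hx j hj
    by_cases hk : ∃ k ∈ x.support, k ≠ j
    · obtain ⟨k, hk, hkj⟩ := hk
      set y : V ε := Hop ε x - (k.1 : ℂ) • x with hy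
      have hyW : y ∈ W := Submodule.sub_mem _ (hW x hx) (Submodule.smul_mem _ _ hx)
      have hyapp : ∀ i : idx ε, y i = ((i.1 : ℂ) - k.1) * x i := by
        intro i
        simp [hy, Finsupp.sub_apply, Finsupp.smul_apply, Hop_apply, sub_mul, smul_eq_mul]
      have hysupp : y.support ⊆ x.support.erase k := by
        intro i hi
        rw [Finsupp.mem_support_iff] at hi
        rw [hyapp] at hi
        refine Finset.mem_erase.2 ⟨?_, ?_⟩
        · rintro rfl; simp at hi
        · rw [Finsupp.mem_support_iff]; intro h0; rw [h0, mul_zero] at hi; exact hi rfl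
      have hjy : j ∈ y.support := by
        rw [Finsupp.mem_support_iff, hyapp]
        refine mul_ne_zero ?_ (Finsupp.mem_support_iff.1 hj)
        intro h
        have : (j.1 : ℂ) = k.1 := by linear_combination h
        exact hkj (Subtype.ext (by exact_mod_cast this)).symm
      refine ih y ?_ hyW j hjy
      calc y.support.card ≤ (x.support.erase k).card := Finset.card_le_card hysupp
        _ ≤ N := by
            have := Finset.card_erase_of_mem hk
            omega
    · push_neg at hk
      have hxj : x = Finsupp.single j (x j) := by
        ext i
        rcases eq_or_ne i j with rfl | hij
        · simp
        · rw [Finsupp.single_apply, if_neg (by exact fun h => hij h.symm)]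
          by_contra h0
          exact hij (hk i (Finsupp.mem_support_iff.2 h0))
      have hxj0 : x j ≠ 0 := Finsupp.mem_support_iff.1 hj
      have : (x j)⁻¹ • x ∈ W := Submodule.smul_mem _ _ hx
      rw [hxj] at this
      rw [Finsupp.smul_single, smul_eq_mul, Finsupp.single_eq_same,
        inv_mul_cancel₀ hxj0] at this
      exact this

end Aux2
section Aux3
variable {ε : ℤˣ}

lemma parity_congr {ε : ℤˣ} {a b : ℤ} (hab : Even (a - b)) (h : (-1:ℤˣ)^b = ε) :
    (-1:ℤˣ)^a = ε := by
  have := parity_shift h (neg_one_zpow_even hab)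
  rwa [show b + (a - b) = a by ring] at this

variable {n : ℤ} {W : Submodule ℂ (V ε)}

lemma step_down (hpos : 0 < n) (hF : ∀ x ∈ W, F'op ε (n:ℂ) x ∈ W)
    {j : ℤ} {h : (-1:ℤˣ)^j = ε}
    (hj : (Finsupp.single (⟨j, h⟩ : idx ε) 1 : V ε) ∈ W) :
    ∃ h', (Finsupp.single (⟨j - 2, h'⟩ : idx ε) 1 : V ε) ∈ W := by
  have hmem := hF _ hj
  rw [F'op, shiftOp_single, one_mul] at hmem
  set c : ℂ := (1 / 2 : ℂ) * ((n:ℂ) + ((|j - 1| : ℤ) : ℂ)) with hc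
  have hcz : c ≠ 0 := by
    have h1 : ((n:ℂ) + ((|j - 1| : ℤ) : ℂ)) = (((n + |j - 1| : ℤ)) : ℂ) := by push_cast; ring
    rw [hc, h1]
    refine mul_ne_zero (by norm_num) ?_
    rw [Int.cast_ne_zero]
    have := abs_nonneg (j - 1)
    omega
  have hsm := Submodule.smul_mem W c⁻¹ hmem
  rw [Finsupp.smul_single, smul_eq_mul, inv_mul_cancel₀ hcz] at hsm
  have h' : (-1:ℤˣ)^(j - 2) = ε := parity_congr ⟨-1, by ring⟩ h
  refine ⟨h', ?_⟩
  rw [single_congr h' (parity_shift h parity_neg_two) (by ring)]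
  exact hsm

lemma step_up (hE : ∀ x ∈ W, E'op ε (n:ℂ) x ∈ W)
    {j : ℤ} {h : (-1:ℤˣ)^j = ε} (hne : |j + 1| ≠ n)
    (hj : (Finsupp.single (⟨j, h⟩ : idx ε) 1 : V ε) ∈ W) :
    ∃ h', (Finsupp.single (⟨j + 2, h'⟩ : idx ε) 1 : V ε) ∈ W := by
  have hmem := hE _ hj
  rw [E'op, shiftOp_single, one_mul] at hmem
  set c : ℂ := (1 / 2 : ℂ) * ((n:ℂ) - ((|j + 1| : ℤ) : ℂ)) with hc
  have hcz : c ≠ 0 := by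
    have h1 : ((n:ℂ) - ((|j + 1| : ℤ) : ℂ)) = (((n - |j + 1| : ℤ)) : ℂ) := by push_cast; ring
    rw [hc, h1]
    refine mul_ne_zero (by norm_num) ?_
    rw [Int.cast_ne_zero]
    omega
  have hsm := Submodule.smul_mem W c⁻¹ hmem
  rw [Finsupp.smul_single, smul_eq_mul, inv_mul_cancel₀ hcz] at hsm
  exact ⟨parity_shift h parity_two, hsm⟩

lemma climb (hE : ∀ x ∈ W, E'op ε (n:ℂ) x ∈ W) :
    ∀ (k : ℕ) (j : ℤ) (h : (-1:ℤˣ)^j = ε),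
      (Finsupp.single (⟨j, h⟩ : idx ε) 1 : V ε) ∈ W →
      (∀ m : ℕ, m < k → |j + 2*(m:ℤ) + 1| ≠ n) →
      ∃ h', (Finsupp.single (⟨j + 2*(k:ℤ), h'⟩ : idx ε) 1 : V ε) ∈ W := by
  intro k
  induction k with
  | zero =>
    intro j h hj _
    refine ⟨parity_congr ⟨0, by push_cast; ring⟩ h, ?_⟩
    rw [single_congr _ h (by push_cast; ring)]
    exact hj
  | succ k ih =>
    intro j h hj hcond
    have h0 : |j + 1| ≠ n := by
      have := hcond 0 (Nat.succ_pos k); simpa using this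
    obtain ⟨h1, hW1⟩ := step_up hE h0 hj
    obtain ⟨h2, hW2⟩ := ih (j + 2) h1 hW1 (fun m hm => by
      have h' := hcond (m + 1) (by omega)
      push_cast at h'
      rw [show j + 2 + 2*(m:ℤ) + 1 = j + 2*((m:ℤ) + 1) + 1 by ring]
      exact h')
    refine ⟨parity_congr ⟨(k:ℤ)+1, by push_cast; ring⟩ h, ?_⟩
    rw [single_congr _ h2 (by push_cast; ring)]
    exact hW2

lemma descend (hpos : 0 < n) (hF : ∀ x ∈ W, F'op ε (n:ℂ) x ∈ W) :
    ∀ (k : ℕ) (j : ℤ) (h : (-1:ℤˣ)^j = ε),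
      (Finsupp.single (⟨j, h⟩ : idx ε) 1 : V ε) ∈ W →
      ∃ h', (Finsupp.single (⟨j - 2*(k:ℤ), h'⟩ : idx ε) 1 : V ε) ∈ W := by
  intro k
  induction k with
  | zero =>
    intro j h hj
    refine ⟨parity_congr ⟨0, by push_cast; ring⟩ h, ?_⟩
    rw [single_congr _ h (by push_cast; ring)]
    exact hj
  | succ k ih =>
    intro j h hj
    obtain ⟨h1, hW1⟩ := step_down hpos hF hj
    obtain ⟨h2, hW2⟩ := ih (j - 2) h1 hW1
    refine ⟨parity_congr ⟨-((k:ℤ)+1), by push_cast; ring⟩ h, ?_⟩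
    rw [single_congr _ h2 (by push_cast; ring)]
    exact hW2

end Aux3
section Aux4
variable {ε : ℤˣ}

lemma classify (n : ℤ) (hn : (-1 : ℤˣ) ^ n = -ε) (hpos : 0 < n)
    (W : Submodule ℂ (V ε))
    (hW : Invariant (Hop ε) (E'op ε (n:ℂ)) (F'op ε (n:ℂ)) W) :
    W = ⊥ ∨ W = spanLE ε (-(n + 1)) ∨ W = spanLE ε (n - 1) ∨ W = ⊤ := by
  obtain ⟨hH, hE, hF⟩ := hW
  have hext : ∀ x ∈ W, ∀ j ∈ x.support, (Finsupp.single j 1 : V ε) ∈ W :=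
    fun x hx => extract hH x.support.card x le_rfl hx
  set P : ℤ → Prop := fun j =>
    ∃ h : (-1:ℤˣ)^j = ε, (Finsupp.single (⟨j, h⟩ : idx ε) 1 : V ε) ∈ W with hP
  have hPmem : ∀ (i : idx ε), (Finsupp.single i 1 : V ε) ∈ W → P i.1 := by
    intro i hi; exact ⟨i.2, hi⟩
  have hreach : ∀ (j : ℤ), P j → ∀ (i : idx ε), i.1 ≤ j →
      (Finsupp.single i 1 : V ε) ∈ W := by
    intro j hj i hij
    obtain ⟨h, hjW⟩ := hj
    obtain ⟨d, hd⟩ := even_of_parity h i.2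
    obtain ⟨h', hW'⟩ := descend hpos hF d.toNat j h hjW
    rw [single_congr h' i.2 (by omega)] at hW'
    exact hW'
  by_cases h2 : ∃ j : ℤ, n - 1 < j ∧ P j
  · right; right; right
    obtain ⟨j, hjgt, h, hjW⟩ := h2
    rw [Submodule.eq_top_iff']
    intro x
    apply mem_of_support
    intro i _
    rcases le_or_gt i.1 j with hle | hlt
    · exact hreach j ⟨h, hjW⟩ i hle
    · obtain ⟨d, hd⟩ := even_of_parity i.2 h
      obtain ⟨h', hW'⟩ := climb hE d.toNat j h hjW (fun m _ => by
        have h1 : 0 < j + 2*(m:ℤ) + 1 := by omega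
        rw [abs_of_pos h1]; omega)
      rw [single_congr h' i.2 (by omega)] at hW'
      exact hW'
  by_cases h3 : ∃ j : ℤ, -(n + 1) < j ∧ P j
  · right; right; left
    push_neg at h2
    have hbd : ∀ (i : idx ε), (Finsupp.single i 1 : V ε) ∈ W → i.1 ≤ n - 1 := by
      intro i hi
      by_contra hgt
      exact h2 i.1 (by omega) (hPmem i hi)
    apply le_antisymm
    · intro x hx
      exact mem_spanLE_of_support x fun i hi => hbd i (hext x hx i hi)
    · rw [spanLE, Submodule.span_le]
      rintro y ⟨i, hi, rfl⟩
      obtain ⟨j, hjgt, h, hjW⟩ := h3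
      have hjle : j ≤ n - 1 := hbd ⟨j, h⟩ hjW
      obtain ⟨d, hd⟩ := even_of_parity (parity_pred hn) h
      obtain ⟨h', hW'⟩ := climb hE d.toNat j h hjW (fun m hm => by
        have hm' : (m:ℤ) < (d.toNat:ℤ) := by exact_mod_cast hm
        have habs : |j + 2*(m:ℤ) + 1| < n := abs_lt.2 ⟨by omega, by omega⟩
        omega)
      exact hreach (n - 1) ⟨parity_pred hn, by
        rw [single_congr (parity_pred hn) h' (by omega)]; exact hW'⟩ i hi
  by_cases h4 : ∃ j : ℤ, P j
  · right; left
    push_neg at h3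
    have hbd : ∀ (i : idx ε), (Finsupp.single i 1 : V ε) ∈ W → i.1 ≤ -(n + 1) := by
      intro i hi
      by_contra hgt
      exact h3 i.1 (by omega) (hPmem i hi)
    apply le_antisymm
    · intro x hx
      exact mem_spanLE_of_support x fun i hi => hbd i (hext x hx i hi)
    · rw [spanLE, Submodule.span_le]
      rintro y ⟨i, hi, rfl⟩
      obtain ⟨j, h, hjW⟩ := h4
      have hjle : j ≤ -(n + 1) := hbd ⟨j, h⟩ hjW
      have hpar : (-1:ℤˣ)^(-(n+1)) = ε :=
        parity_congr (a := -(n+1)) (b := n - 1) ⟨-n, by ring⟩ (parity_pred hn)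
      obtain ⟨d, hd⟩ := even_of_parity hpar h
      obtain ⟨h', hW'⟩ := climb hE d.toNat j h hjW (fun m hm => by
        have hm' : (m:ℤ) < (d.toNat:ℤ) := by exact_mod_cast hm
        have hneg : j + 2*(m:ℤ) + 1 < 0 := by omega
        rw [abs_of_neg hneg]; omega)
      exact hreach (-(n + 1)) ⟨hpar, by
        rw [single_congr hpar h' (by omega)]; exact hW'⟩ i hi
  · left
    rw [eq_bot_iff]
    intro x hx
    rw [Submodule.mem_bot]
    by_contra h0
    obtain ⟨i, hi⟩ := Finsupp.support_nonempty_iff.2 h0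
    exact h4 ⟨i.1, hPmem i (hext x hx i hi)⟩

end Aux4
section Aux5
variable {ε : ℤˣ}

lemma units_ne_neg (ε : ℤˣ) : ε ≠ -ε := by
  rcases Int.units_eq_one_or ε with rfl | rfl <;> decide

lemma parity_negn1 {n : ℤ} (hn : (-1:ℤˣ)^n = -ε) : (-1:ℤˣ)^(-(n+1)) = ε :=
  parity_congr (a := -(n+1)) (b := n-1) ⟨-n, by ring⟩ (parity_pred hn)

lemma shiftOp_mem_spanLE {s : ℤ} {hs : (-1:ℤˣ)^s = 1} {c : ℤ → ℂ} {m : ℤ}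
    (h : ∀ j : idx ε, j.1 ≤ m → (j.1 + s ≤ m ∨ c j.1 = 0)) {x : V ε}
    (hx : x ∈ spanLE ε m) : shiftOp ε s hs c x ∈ spanLE ε m := by
  rw [spanLE] at hx
  induction hx using Submodule.span_induction with
  | mem y hy =>
    obtain ⟨j, hj, rfl⟩ := hy
    rw [shiftOp_single, one_mul]
    rcases h j hj with h' | h'
    · have := Submodule.smul_mem (spanLE ε m) (c j.1)
        (mem_spanLE_single ⟨j.1 + s, parity_shift j.2 hs⟩ h')
      rwa [Finsupp.smul_single, smul_eq_mul, mul_one] at this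
    · rw [h', Finsupp.single_zero]; exact Submodule.zero_mem _
  | zero => rw [map_zero]; exact Submodule.zero_mem _
  | add x y _ _ hx hy => rw [map_add]; exact Submodule.add_mem _ hx hy
  | smul a x _ hx => rw [map_smul]; exact Submodule.smul_mem _ _ hx

lemma inv_A (n : ℤ) (hn : (-1:ℤˣ)^n = -ε) (hpos : 0 < n) :
    Invariant (Hop ε) (E'op ε (n:ℂ)) (F'op ε (n:ℂ)) (spanLE ε (-(n+1))) := by
  refine ⟨fun x hx => ?_, fun x hx => ?_, fun x hx => ?_⟩
  · exact shiftOp_mem_spanLE (fun j hj => Or.inl (by omega)) hx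
  · refine shiftOp_mem_spanLE (fun j hj => ?_) hx
    by_cases hle : j.1 + 2 ≤ -(n+1)
    · exact Or.inl hle
    · right
      obtain ⟨r, hr⟩ := even_of_parity j.2 (parity_negn1 hn)
      have hj1 : j.1 = -(n+1) := by omega
      have habs : |j.1 + 1| = n := by rw [hj1]; rw [show -(n+1)+1 = -n by ring, abs_neg, abs_of_pos hpos]
      rw [habs]
      ring
  · exact shiftOp_mem_spanLE (fun j hj => Or.inl (by omega)) hx

lemma inv_B (n : ℤ) (hn : (-1:ℤˣ)^n = -ε) (hpos : 0 < n) :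
    Invariant (Hop ε) (E'op ε (n:ℂ)) (F'op ε (n:ℂ)) (spanLE ε (n-1)) := by
  refine ⟨fun x hx => ?_, fun x hx => ?_, fun x hx => ?_⟩
  · exact shiftOp_mem_spanLE (fun j hj => Or.inl (by omega)) hx
  · refine shiftOp_mem_spanLE (fun j hj => ?_) hx
    by_cases hle : j.1 + 2 ≤ n - 1
    · exact Or.inl hle
    · right
      obtain ⟨r, hr⟩ := even_of_parity j.2 (parity_pred hn)
      have hj1 : j.1 = n - 1 := by omega
      have habs : |j.1 + 1| = n := by rw [hj1]; rw [show n-1+1 = n by ring, abs_of_pos hpos]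
      rw [habs]
      ring
  · exact shiftOp_mem_spanLE (fun j hj => Or.inl (by omega)) hx

lemma single_not_mem_spanLE {m : ℤ} (i : idx ε) (hi : m < i.1) :
    (Finsupp.single i 1 : V ε) ∉ spanLE ε m := by
  intro h
  have := spanLE_apply_eq_zero h i hi
  rw [Finsupp.single_eq_same] at this
  exact one_ne_zero this

lemma A_lt_B (n : ℤ) (hn : (-1:ℤˣ)^n = -ε) (hpos : 0 < n) :
    spanLE ε (-(n+1)) < spanLE ε (n-1) := by
  refine lt_of_le_of_ne (spanLE_mono (by omega)) ?_
  intro h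
  have h1 : (Finsupp.single (⟨n-1, parity_pred hn⟩ : idx ε) 1 : V ε) ∈ spanLE ε (n-1) :=
    mem_spanLE_single _ le_rfl
  rw [← h] at h1
  exact single_not_mem_spanLE _ (show -(n+1) < n-1 by omega) h1

lemma A_ne_bot (n : ℤ) (hn : (-1:ℤˣ)^n = -ε) (hpos : 0 < n) :
    spanLE ε (-(n+1)) ≠ ⊥ := by
  intro h
  have h1 : (Finsupp.single (⟨-(n+1), parity_negn1 hn⟩ : idx ε) 1 : V ε) ∈ spanLE ε (-(n+1)) :=
    mem_spanLE_single _ le_rfl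
  rw [h, Submodule.mem_bot] at h1
  exact one_ne_zero (Finsupp.single_eq_zero.1 h1)

lemma B_ne_top (n : ℤ) (hn : (-1:ℤˣ)^n = -ε) (hpos : 0 < n) :
    spanLE ε (n-1) ≠ ⊤ := by
  intro h
  have h1 : (Finsupp.single (⟨n+1, parity_succ hn⟩ : idx ε) 1 : V ε) ∈ spanLE ε (n-1) := by
    rw [h]; trivial
  exact single_not_mem_spanLE _ (show n-1 < n+1 by omega) h1

lemma irr_A (n : ℤ) (hn : (-1:ℤˣ)^n = -ε) (hpos : 0 < n) :
    IsIrreducibleSubmodule (Hop ε) (E'op ε (n:ℂ)) (F'op ε (n:ℂ)) (spanLE ε (-(n+1))) := by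
  refine ⟨inv_A n hn hpos, A_ne_bot n hn hpos, fun U hU hUle => ?_⟩
  rcases classify n hn hpos U hU with h | h | h | h
  · exact Or.inl h
  · exact Or.inr h
  · exfalso
    rw [h] at hUle
    exact (A_lt_B n hn hpos).not_ge hUle
  · exfalso
    rw [h] at hUle
    exact B_ne_top n hn hpos (top_le_iff.1 (hUle.trans (spanLE_mono (by omega))))

end Aux5
section Aux6
variable {M : Type*} [AddCommGroup M] [Module ℂ M]

lemma inv_comap (A B C : M →ₗ[ℂ] M) (Q : Submodule ℂ M)
    (hA : Q ≤ Q.comap A) (hB : Q ≤ Q.comap B) (hC : Q ≤ Q.comap C)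
    (W' : Submodule ℂ (M ⧸ Q))
    (h : Invariant (Q.mapQ Q A hA) (Q.mapQ Q B hB) (Q.mapQ Q C hC) W') :
    Invariant A B C (W'.comap Q.mkQ) := by
  obtain ⟨h1, h2, h3⟩ := h
  refine ⟨fun x hx => ?_, fun x hx => ?_, fun x hx => ?_⟩ <;>
    rw [Submodule.mem_comap, Submodule.mkQ_apply] at hx ⊢
  · exact h1 _ hx
  · exact h2 _ hx
  · exact h3 _ hx

lemma inv_map (A B C : M →ₗ[ℂ] M) (Q : Submodule ℂ M)
    (hA : Q ≤ Q.comap A) (hB : Q ≤ Q.comap B) (hC : Q ≤ Q.comap C)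
    (W : Submodule ℂ M) (h : Invariant A B C W) :
    Invariant (Q.mapQ Q A hA) (Q.mapQ Q B hB) (Q.mapQ Q C hC) (W.map Q.mkQ) := by
  obtain ⟨h1, h2, h3⟩ := h
  refine ⟨?_, ?_, ?_⟩ <;> rintro y ⟨x, hx, rfl⟩
  · exact ⟨A x, h1 x hx, (Submodule.mapQ_apply Q Q A x).symm⟩
  · exact ⟨B x, h2 x hx, (Submodule.mapQ_apply Q Q B x).symm⟩
  · exact ⟨C x, h3 x hx, (Submodule.mapQ_apply Q Q C x).symm⟩

lemma Q_le_comap (Q : Submodule ℂ M) (A : M →ₗ[ℂ] M)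
    (h : ∀ x ∈ Q, A x ∈ Q) : Q ≤ Q.comap A :=
  fun x hx => Submodule.mem_comap.2 (h x hx)

end Aux6
section Aux7
variable {ε : ℤˣ}

/-- The middle basis vectors `v_{2k+1-n}`, `0 ≤ k < n`. -/
noncomputable def gfam (ε : ℤˣ) (n : ℤ) (hn : (-1:ℤˣ)^n = -ε) : Fin n.toNat → V ε :=
  fun k => Finsupp.single
    ⟨2*(k:ℤ)+1-n, parity_congr ⟨(k:ℤ)+1-n, by ring⟩ (parity_pred hn)⟩ 1

lemma B_eq_sup (n : ℤ) (hn : (-1:ℤˣ)^n = -ε) (hpos : 0 < n) :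
    spanLE ε (n-1) = spanLE ε (-(n+1)) ⊔ Submodule.span ℂ (Set.range (gfam ε n hn)) := by
  apply le_antisymm
  · rw [spanLE, Submodule.span_le]
    rintro y ⟨i, hi, rfl⟩
    by_cases hle : i.1 ≤ -(n+1)
    · exact Submodule.mem_sup_left (mem_spanLE_single i hle)
    · apply Submodule.mem_sup_right
      obtain ⟨r, hr⟩ := even_of_parity i.2 (parity_pred hn)
      have hk : 0 ≤ (i.1 + n - 1)/2 ∧ (i.1 + n - 1)/2 < n.toNat := by omega
      refine Submodule.subset_span ⟨⟨((i.1 + n - 1)/2).toNat, by omega⟩, ?_⟩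
      rw [gfam]
      rw [single_congr _ i.2 (by simp only []; omega)]
  · apply sup_le (spanLE_mono (by omega))
    rw [Submodule.span_le]
    rintro y ⟨k, rfl⟩
    rw [gfam]
    apply mem_spanLE_single
    have := k.isLt
    simp only []
    omega

lemma linind_gfam (n : ℤ) (hn : (-1:ℤˣ)^n = -ε) (hpos : 0 < n) :
    LinearIndependent ℂ (fun k => (spanLE ε (-(n+1))).mkQ (gfam ε n hn k)) := by
  rw [Fintype.linearIndependent_iff]
  intro a ha k0
  have hmem : (∑ k, a k • gfam ε n hn k) ∈ spanLE ε (-(n+1)) := by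
    rw [← Submodule.Quotient.mk_eq_zero]
    rw [← Submodule.mkQ_apply, map_sum]
    simpa only [map_smul] using ha
  have hcoef := spanLE_apply_eq_zero hmem
    ⟨2*(k0:ℤ)+1-n, parity_congr ⟨(k0:ℤ)+1-n, by ring⟩ (parity_pred hn)⟩
    (by simp only []; omega)
  rw [Finsupp.finset_sum_apply] at hcoef
  rw [Finset.sum_eq_single k0] at hcoef
  · rw [Finsupp.smul_apply, gfam, Finsupp.single_eq_same, smul_eq_mul, mul_one] at hcoef
    exact hcoef
  · intro k _ hk
    rw [Finsupp.smul_apply, gfam, Finsupp.single_apply]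
    rw [if_neg, smul_zero]
    intro h
    apply hk
    have : 2*(k:ℤ)+1-n = 2*(k0:ℤ)+1-n := congrArg Subtype.val h
    exact Fin.ext (by omega)
  · intro h; exact absurd (Finset.mem_univ k0) h

lemma finrank_middle (n : ℤ) (hn : (-1:ℤˣ)^n = -ε) (hpos : 0 < n) :
    (Module.finrank ℂ ((spanLE ε (n-1)).map (spanLE ε (-(n+1))).mkQ) : ℤ) = n := by
  have hmap : (spanLE ε (n-1)).map (spanLE ε (-(n+1))).mkQ =
      Submodule.span ℂ (Set.range (fun k => (spanLE ε (-(n+1))).mkQ (gfam ε n hn k))) := by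
    have h1 : (spanLE ε (-(n+1))).map (spanLE ε (-(n+1))).mkQ = ⊥ :=
      le_bot_iff.1 (Submodule.map_le_iff_le_comap.2
        (by rw [Submodule.comap_bot, Submodule.ker_mkQ]))
    rw [B_eq_sup n hn hpos, Submodule.map_sup, h1, bot_sup_eq, Submodule.map_span,
      ← Set.range_comp]
    rfl
  rw [hmap, finrank_span_eq_card (linind_gfam n hn hpos)]
  simp only [Fintype.card_fin]
  omega

end Aux7

section Aux8
variable {ε : ℤˣ}

lemma map_self_mkQ_bot {M : Type*} [AddCommGroup M] [Module ℂ M] (Q : Submodule ℂ M) :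
    Q.map Q.mkQ = ⊥ :=
  le_bot_iff.1 (Submodule.map_le_iff_le_comap.2
    (by rw [Submodule.comap_bot, Submodule.ker_mkQ]))

lemma B_ne_bot (n : ℤ) (hn : (-1:ℤˣ)^n = -ε) (hpos : 0 < n) :
    spanLE ε (n-1) ≠ ⊥ := by
  intro h
  have h1 : (Finsupp.single (⟨n-1, parity_pred hn⟩ : idx ε) 1 : V ε) ∈ spanLE ε (n-1) :=
    mem_spanLE_single _ le_rfl
  rw [h, Submodule.mem_bot] at h1
  exact one_ne_zero (Finsupp.single_eq_zero.1 h1)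

end Aux8


/-- For `n ∈ ℤ_{-ε}`, `n > 0`, in the module `π'(ε,n)`:
`A = span{v_j : j ≤ -(n+1)}` and `B = span{v_j : j ≤ n-1}` are submodules with
`A ⊂ B`; `A` is irreducible; the quotient `B/A` is irreducible of dimension `n`;
and the quotient `V_ε/B` is irreducible. (Composition series of shape
`(D_{-n} ] F_n ] D_n)`.) -/
theorem pi'_composition_series (ε : ℤˣ) (n : ℤ)
    (hn : (-1 : ℤˣ) ^ n = -ε) (hpos : 0 < n) :
    Invariant (Hop ε) (E'op ε (n : ℂ)) (F'op ε (n : ℂ)) (spanLE ε (-(n + 1))) ∧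
    Invariant (Hop ε) (E'op ε (n : ℂ)) (F'op ε (n : ℂ)) (spanLE ε (n - 1)) ∧
    spanLE ε (-(n + 1)) < spanLE ε (n - 1) ∧
    IsIrreducibleSubmodule (Hop ε) (E'op ε (n : ℂ)) (F'op ε (n : ℂ))
      (spanLE ε (-(n + 1))) ∧
    (∃ (hH : spanLE ε (-(n + 1)) ≤ (spanLE ε (-(n + 1))).comap (Hop ε))
       (hE : spanLE ε (-(n + 1)) ≤ (spanLE ε (-(n + 1))).comap (E'op ε (n : ℂ)))
       (hF : spanLE ε (-(n + 1)) ≤ (spanLE ε (-(n + 1))).comap (F'op ε (n : ℂ))),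
       IsIrreducibleSubmodule
         (Submodule.mapQ (spanLE ε (-(n + 1))) (spanLE ε (-(n + 1))) (Hop ε) hH)
         (Submodule.mapQ (spanLE ε (-(n + 1))) (spanLE ε (-(n + 1))) (E'op ε (n : ℂ)) hE)
         (Submodule.mapQ (spanLE ε (-(n + 1))) (spanLE ε (-(n + 1))) (F'op ε (n : ℂ)) hF)
         ((spanLE ε (n - 1)).map (spanLE ε (-(n + 1))).mkQ) ∧
       (Module.finrank ℂ ((spanLE ε (n - 1)).map (spanLE ε (-(n + 1))).mkQ) : ℤ) = n) ∧
    (∃ (hH : spanLE ε (n - 1) ≤ (spanLE ε (n - 1)).comap (Hop ε))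
       (hE : spanLE ε (n - 1) ≤ (spanLE ε (n - 1)).comap (E'op ε (n : ℂ)))
       (hF : spanLE ε (n - 1) ≤ (spanLE ε (n - 1)).comap (F'op ε (n : ℂ))),
       IsIrreducibleRep
         (Submodule.mapQ (spanLE ε (n - 1)) (spanLE ε (n - 1)) (Hop ε) hH)
         (Submodule.mapQ (spanLE ε (n - 1)) (spanLE ε (n - 1)) (E'op ε (n : ℂ)) hE)
         (Submodule.mapQ (spanLE ε (n - 1)) (spanLE ε (n - 1)) (F'op ε (n : ℂ)) hF)) := by
  have invA := inv_A n hn hpos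
  have invB := inv_B n hn hpos
  refine ⟨invA, invB, A_lt_B n hn hpos, irr_A n hn hpos, ?_, ?_⟩
  · -- quotient by A
    set Q := spanLE ε (-(n+1)) with hQdef
    have hH := Q_le_comap Q (Hop ε) invA.1
    have hE := Q_le_comap Q (E'op ε (n:ℂ)) invA.2.1
    have hF := Q_le_comap Q (F'op ε (n:ℂ)) invA.2.2
    refine ⟨hH, hE, hF,
      ⟨inv_map _ _ _ Q hH hE hF _ invB, ?_, ?_⟩, finrank_middle n hn hpos⟩
    · -- nonzero
      intro hbot
      have hle : spanLE ε (n-1) ≤ Q := by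
        intro x hx
        have hm : Q.mkQ x ∈ (spanLE ε (n-1)).map Q.mkQ :=
          Submodule.mem_map_of_mem hx
        rw [hbot, Submodule.mem_bot, Submodule.mkQ_apply,
          Submodule.Quotient.mk_eq_zero] at hm
        exact hm
      exact (A_lt_B n hn hpos).not_ge hle
    · -- minimality
      intro U' hU' hle
      set U := U'.comap Q.mkQ with hUdef
      have hinv : Invariant (Hop ε) (E'op ε (n:ℂ)) (F'op ε (n:ℂ)) U :=
        inv_comap _ _ _ Q hH hE hF U' hU'
      have hQU : Q ≤ U := by
        intro x hx
        show Q.mkQ x ∈ U'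
        have h0 : Q.mkQ x = 0 := by
          rw [Submodule.mkQ_apply, Submodule.Quotient.mk_eq_zero]; exact hx
        rw [h0]; exact U'.zero_mem
      have hUB : U ≤ spanLE ε (n-1) := by
        have h1 := Submodule.comap_mono (f := Q.mkQ) hle
        rwa [Submodule.comap_map_mkQ,
          sup_eq_right.2 (spanLE_mono (show -(n+1) ≤ n - 1 by omega))] at h1
      have hU'eq : U' = U.map Q.mkQ :=
        (Submodule.map_comap_eq_of_surjective Q.mkQ_surjective U').symm
      rcases classify n hn hpos U hinv with h | h | h | h
      · exact absurd (le_bot_iff.1 (h ▸ hQU)) (A_ne_bot n hn hpos)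
      · left; rw [hU'eq, h]; exact map_self_mkQ_bot Q
      · right; rw [hU'eq, h]
      · exact absurd (top_le_iff.1 (h ▸ hUB)) (B_ne_top n hn hpos)
  · -- quotient by B
    set Q := spanLE ε (n-1) with hQdef
    have hH := Q_le_comap Q (Hop ε) invB.1
    have hE := Q_le_comap Q (E'op ε (n:ℂ)) invB.2.1
    have hF := Q_le_comap Q (F'op ε (n:ℂ)) invB.2.2
    refine ⟨hH, hE, hF, ?_⟩
    intro W' hW'
    set U := W'.comap Q.mkQ with hUdef
    have hinv : Invariant (Hop ε) (E'op ε (n:ℂ)) (F'op ε (n:ℂ)) U :=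
      inv_comap _ _ _ Q hH hE hF W' hW'
    have hQU : Q ≤ U := by
      intro x hx
      show Q.mkQ x ∈ W'
      have h0 : Q.mkQ x = 0 := by
        rw [Submodule.mkQ_apply, Submodule.Quotient.mk_eq_zero]; exact hx
      rw [h0]; exact W'.zero_mem
    have hW'eq : W' = U.map Q.mkQ :=
      (Submodule.map_comap_eq_of_surjective Q.mkQ_surjective W').symm
    rcases classify n hn hpos U hinv with h | h | h | h
    · exact absurd (le_bot_iff.1 (h ▸ hQU)) (B_ne_bot n hn hpos)
    · exact absurd (h ▸ hQU) (A_lt_B n hn hpos).not_ge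
    · left; rw [hW'eq, h]; exact map_self_mkQ_bot Q
    · right; rw [hW'eq, h, Submodule.map_top, Submodule.range_mkQ]

end SL2Deform
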